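/- For every a ≥ 0 and every integer n ≥ 1, the n-th derivative of f_a at any x > 0 equals (−1)^{n+1} · n! · e^a · (e^a − 1)^{n−1} / (1 + x(e^a − 1))^{n+1}. -/

import Mathlib

/-- The homographic family `f_a(x) = x e^a / (1 + x (e^a - 1))`. -/
noncomputable def f (a x : ℝ) : ℝ := x * Real.exp a / (1 + x * (Real.exp a - 1))

lemma denom_pos (a x : ℝ) (ha : 0 ≤ a) (hx : 0 < x) :
    0 < 1 + x * (Real.exp a - 1) := by
  have h1 : (1:ℝ) ≤ Real.exp a := Real.one_le_exp ha
  nlinarith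

lemma hasDerivAt_aux (C c : ℝ) (m : ℕ) (x : ℝ) (h : 1 + x * c ≠ 0) :
    HasDerivAt (fun y => C / (1 + y * c) ^ (m + 1))
      (-C * (m + 1) * c / (1 + x * c) ^ (m + 2)) x := by
  have h1 : HasDerivAt (fun y : ℝ => 1 + y * c) c x := by
    simpa using ((hasDerivAt_id x).mul_const c).const_add 1
  have h2 : HasDerivAt (fun y => (1 + y * c) ^ (m + 1))
      ((m + 1) * (1 + x * c) ^ m * c) x := by
    simpa using h1.fun_pow (m + 1)
  have h3 := (hasDerivAt_const x C).fun_div h2 (pow_ne_zero _ h)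
  refine h3.congr_deriv ?_
  field_simp
  ring

lemma key (a : ℝ) (ha : 0 ≤ a) (m : ℕ) : ∀ x : ℝ, 0 < x →
    iteratedDeriv (m + 1) (f a) x =
      (-1) ^ (m + 2) * ((m + 1).factorial : ℝ) * Real.exp a * (Real.exp a - 1) ^ m /
        (1 + x * (Real.exp a - 1)) ^ (m + 2) := by
  set E := Real.exp a with hE
  set c := E - 1 with hc
  induction m with
  | zero =>
    intro x hx
    have hu : 1 + x * c ≠ 0 := ne_of_gt (denom_pos a x ha hx)
    rw [iteratedDeriv_one]
    have h1 : HasDerivAt (fun y : ℝ => 1 + y * c) c x := by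
      simpa using ((hasDerivAt_id x).mul_const c).const_add 1
    have h2 : HasDerivAt (fun y : ℝ => y * E) E x := by
      simpa using (hasDerivAt_id x).mul_const E
    have h3 := h2.fun_div h1 hu
    have heq : f a = fun y : ℝ => y * E / (1 + y * c) := rfl
    rw [heq, h3.deriv]
    field_simp
    ring
  | succ m ih =>
    intro x hx
    have hu : 1 + x * c ≠ 0 := ne_of_gt (denom_pos a x ha hx)
    rw [iteratedDeriv_succ]
    set C : ℝ := (-1) ^ (m + 2) * ((m + 1).factorial : ℝ) * E * c ^ m with hC
    have heq : iteratedDeriv (m + 1) (f a) =ᶠ[nhds x]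
        fun y => C / (1 + y * c) ^ (m + 2) := by
      filter_upwards [isOpen_Ioi.mem_nhds (show x ∈ Set.Ioi 0 from hx)] with y hy
      exact ih y hy
    rw [heq.deriv_eq]
    have h := hasDerivAt_aux C c (m + 1) x hu
    rw [h.deriv, hC]
    have hfac : ((m + 1 + 1).factorial : ℝ) = (m + 2) * ((m + 1).factorial : ℝ) := by
      rw [Nat.factorial_succ]; push_cast; ring
    rw [hfac]
    push_cast
    ring

/-- For every `a ≥ 0` and every `n ≥ 1`, the `n`-th derivative of `f_a` at any `x > 0`
equals `(-1)^(n+1) n! e^a (e^a - 1)^(n-1) / (1 + x (e^a - 1))^(n+1)`. -/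
theorem iteratedDeriv_f (a : ℝ) (ha : 0 ≤ a) (n : ℕ) (hn : 1 ≤ n) (x : ℝ) (hx : 0 < x) :
    iteratedDeriv n (f a) x =
      (-1) ^ (n + 1) * (n.factorial : ℝ) * Real.exp a * (Real.exp a - 1) ^ (n - 1) /
        (1 + x * (Real.exp a - 1)) ^ (n + 1) := by
  obtain ⟨m, rfl⟩ : ∃ m, n = m + 1 := ⟨n - 1, (Nat.succ_pred_eq_of_pos hn).symm⟩
  simpa using key a ha m x hx
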